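/- Let f : K × K → ℝ be a cyclic monotone bifunction (for every n and every x₁,…,xₙ ∈ K, f(x₁,x₂) + f(x₂,x₃) + ⋯ + f(xₙ,x₁) ≤ 0) with f(x,x) = 0 for all x. Then there exists a function g : K → ℝ such that f(x,y) ≤ g(y) − g(x) for all x,y ∈ K. -/

import Mathlib

theorem cyclic_monotone_has_potential
    {α : Type*} (K : Set α) (hKne : K.Nonempty) (f : α → α → ℝ)
    (hdiag : ∀ x ∈ K, f x x = 0)
    (hcyc : ∀ (n : ℕ) (x : ℕ → α), (∀ i, x i ∈ K) →
      (∑ i ∈ Finset.range n, f (x i) (x (i + 1))) + f (x n) (x 0) ≤ 0) :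
    ∃ g : α → ℝ, ∀ x ∈ K, ∀ y ∈ K, f x y ≤ g y - g x := by
  obtain ⟨x₀, hx₀⟩ := hKne
  set S : α → Set ℝ := fun y =>
    {s : ℝ | ∃ (n : ℕ) (x : ℕ → α), (∀ i, x i ∈ K) ∧ x 0 = x₀ ∧ x n = y ∧
      s = ∑ i ∈ Finset.range n, f (x i) (x (i + 1))} with hS
  have hne : ∀ y ∈ K, (S y).Nonempty := by
    intro y hy
    refine ⟨f x₀ y, 1, fun i => if i = 0 then x₀ else y, ?_, ?_, ?_, ?_⟩
    · intro i; dsimp only; split <;> assumption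
    · simp
    · simp
    · simp
  have hbdd : ∀ y ∈ K, BddAbove (S y) := by
    intro y hy
    refine ⟨-f y x₀, ?_⟩
    rintro s ⟨n, x, hxK, hx0, hxn, rfl⟩
    have := hcyc n x hxK
    rw [hx0, hxn] at this
    linarith
  have hext : ∀ x ∈ K, ∀ y ∈ K, ∀ s ∈ S x, s + f x y ∈ S y := by
    intro x hx y hy s hs
    obtain ⟨n, c, hcK, hc0, hcn, rfl⟩ := hs
    refine ⟨n + 1, fun i => if i ≤ n then c i else y, ?_, ?_, ?_, ?_⟩
    · intro i; dsimp only; split <;> [exact hcK i; exact hy]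
    · simp [hc0]
    · simp
    · rw [Finset.sum_range_succ]
      congr 1
      · apply Finset.sum_congr rfl
        intro i hi
        simp only [Finset.mem_range] at hi
        have h1 : i ≤ n := hi.le
        have h2 : i + 1 ≤ n := hi
        simp [h1, h2]
      · simp [hcn]
  refine ⟨fun y => sSup (S y), ?_⟩
  intro x hx y hy
  have h1 : sSup (S x) + f x y ≤ sSup (S y) := by
    have : sSup (S x) ≤ sSup (S y) - f x y := by
      apply csSup_le (hne x hx)
      intro s hs
      have := le_csSup (hbdd y hy) (hext x hx y hy s hs)
      linarith
    linarith
  linarith
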